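/- arXiv:2001.06155 — 3 statements merged into one kernel-verified Lean document; each statement's English description precedes it below -/
import Mathlib

section
/- Let $\Omega \subseteq \mathbb{R}^n$ be a convex open domain and $\Psi: \Omega \to \mathbb{R}$ a $C^2$ strongly convex function. If the Riemannian metric $g_{ij} = \partial_i \partial_j \Psi$ on $\Omega$ is complete, then the Kähler metric $\mathfrak{h}_{i\bar j} = \Psi_{ij}(x)$ on the tube domain $T\Omega = \Omega \times \mathbb{R}^n \subseteq \mathbb{C}^n$ (which is independent of the imaginary coordinates $y$) is complete. -/
open Set MeasureTheory

/-- The quadratic form of the Hessian metric `g_{ij} = ∂_i∂_j Ψ` at `x`,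
applied to the velocity vector `u`. -/
noncomputable def hessForm {n : ℕ} (Ψ : (Fin n → ℝ) → ℝ) (x u : Fin n → ℝ) : ℝ :=
  ∑ i, ∑ j, u i * u j *
    fderiv ℝ (fun z => fderiv ℝ Ψ z (Pi.single i 1)) x (Pi.single j 1)

/-- A curve eventually leaves every compact subset of `Ω`. -/
def EscapesCompacts {α : Type*} [TopologicalSpace α] (Ω : Set α) (γ : ℝ → α) : Prop :=
  ∀ K : Set α, IsCompact K → K ⊆ Ω → ∃ T : ℝ, ∀ s, T ≤ s → γ s ∉ K

/-- Completeness of the Hessian metric `g = D²Ψ` on `Ω`: every `C¹` curve in `Ω`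
leaving every compact set has infinite length. -/
def HessianComplete {n : ℕ} (Ω : Set (Fin n → ℝ)) (Ψ : (Fin n → ℝ) → ℝ) : Prop :=
  ∀ γ : ℝ → (Fin n → ℝ), ContDiff ℝ 1 γ → (∀ s, 0 ≤ s → γ s ∈ Ω) →
    EscapesCompacts Ω γ →
    ∫⁻ s in Ioi (0:ℝ),
      ENNReal.ofReal (Real.sqrt (hessForm Ψ (γ s) (deriv γ s))) = ⊤

/-- Completeness of the Kähler Sasaki metric `𝔥_{i j̄} = Ψ_{ij}(x)` on the tube
domain `TΩ = Ω × ℝⁿ ⊆ ℂⁿ`: for a curve `γ(s) = (x(s), y(s))`,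
`|γ̇|²_𝔥 = Σ (ẋᵢẋⱼ + ẏᵢẏⱼ) Ψ_{ij}(x)`, and every `C¹` curve leaving every
compact subset of `TΩ` has infinite length. -/
def TubeComplete {n : ℕ} (Ω : Set (Fin n → ℝ)) (Ψ : (Fin n → ℝ) → ℝ) : Prop :=
  ∀ x y : ℝ → (Fin n → ℝ), ContDiff ℝ 1 x → ContDiff ℝ 1 y →
    (∀ s, 0 ≤ s → x s ∈ Ω) →
    EscapesCompacts (Ω ×ˢ (univ : Set (Fin n → ℝ))) (fun s => (x s, y s)) →
    ∫⁻ s in Ioi (0:ℝ),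
      ENNReal.ofReal (Real.sqrt
        (hessForm Ψ (x s) (deriv x s) + hessForm Ψ (x s) (deriv y s))) = ⊤

private lemma hessForm_zero {n : ℕ} (Ψ : (Fin n → ℝ) → ℝ) (z : Fin n → ℝ) :
    hessForm Ψ z 0 = 0 := by
  simp [hessForm]

private lemma hessForm_smul {n : ℕ} (Ψ : (Fin n → ℝ) → ℝ) (z : Fin n → ℝ) (a : ℝ)
    (u : Fin n → ℝ) : hessForm Ψ z (a • u) = a ^ 2 * hessForm Ψ z u := by
  unfold hessForm
  rw [Finset.mul_sum]
  refine Finset.sum_congr rfl fun i _ => ?_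
  rw [Finset.mul_sum]
  refine Finset.sum_congr rfl fun j _ => ?_
  simp only [Pi.smul_apply, smul_eq_mul]
  ring

private lemma hessForm_nonneg {n : ℕ} {Ω : Set (Fin n → ℝ)} {Ψ : (Fin n → ℝ) → ℝ}
    (hconv : ∀ x ∈ Ω, ∀ u : Fin n → ℝ, u ≠ 0 → 0 < hessForm Ψ x u)
    {z : Fin n → ℝ} (hz : z ∈ Ω) (u : Fin n → ℝ) : 0 ≤ hessForm Ψ z u := by
  rcases eq_or_ne u 0 with rfl | h
  · simp [hessForm_zero]
  · exact (hconv z hz u h).le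

private lemma length_lb {n : ℕ} (f : ℝ → (Fin n → ℝ)) (hf : ContDiff ℝ 1 f)
    (g : ℝ → ENNReal) (m a b : ℝ) (hm : 0 ≤ m) (hab : a ≤ b)
    (hpt : ∀ s ∈ Ioc a b, ENNReal.ofReal (m * ‖deriv f s‖) ≤ g s) :
    ENNReal.ofReal (m * ‖f b - f a‖) ≤ ∫⁻ s in Ioc a b, g s := by
  have hd : Continuous (deriv f) := hf.continuous_deriv le_rfl
  have h1 : ∫ s in a..b, deriv f s = f b - f a :=
    intervalIntegral.integral_deriv_eq_sub
      (fun s _ => (hf.differentiable one_ne_zero).differentiableAt) (hd.intervalIntegrable a b)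
  have h2 : ‖f b - f a‖ ≤ ∫ s in a..b, ‖deriv f s‖ := by
    rw [← h1]; exact intervalIntegral.norm_integral_le_integral_norm hab
  have h3 : m * ‖f b - f a‖ ≤ ∫ s in Ioc a b, m * ‖deriv f s‖ := by
    have h4 : m * ‖f b - f a‖ ≤ ∫ s in a..b, m * ‖deriv f s‖ := by
      rw [intervalIntegral.integral_const_mul]
      exact mul_le_mul_of_nonneg_left h2 hm
    rwa [intervalIntegral.integral_of_le hab] at h4
  have hint : IntegrableOn (fun s => m * ‖deriv f s‖) (Ioc a b) :=
    (continuous_const.mul hd.norm).integrableOn_Ioc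
  calc ENNReal.ofReal (m * ‖f b - f a‖)
      ≤ ENNReal.ofReal (∫ s in Ioc a b, m * ‖deriv f s‖) := ENNReal.ofReal_le_ofReal h3
    _ = ∫⁻ s in Ioc a b, ENNReal.ofReal (m * ‖deriv f s‖) :=
        MeasureTheory.ofReal_integral_eq_lintegral_ofReal hint
          (Filter.Eventually.of_forall fun s => mul_nonneg hm (norm_nonneg _))
    _ ≤ ∫⁻ s in Ioc a b, g s := by
        refine lintegral_mono_ae ?_
        rw [ae_restrict_iff' measurableSet_Ioc]
        exact Filter.Eventually.of_forall hpt

private lemma excursion {n : ℕ} (K : Set (Fin n → ℝ)) (hK : K.Nonempty) {ε a b : ℝ}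
    (hε : 0 < ε) (x : ℝ → Fin n → ℝ) (hx : Continuous x) (hab : a ≤ b)
    (ha : x a ∈ K) (hb : x b ∉ Metric.cthickening ε K) :
    ∃ b' ∈ Ioc a b, (∀ s ∈ Icc a b', x s ∈ Metric.cthickening ε K) ∧ ε ≤ ‖x b' - x a‖ := by
  set S : Set ℝ := Icc a b ∩ x ⁻¹' (Metric.thickening ε K)ᶜ with hS
  have hSc : IsClosed S :=
    isClosed_Icc.inter (Metric.isOpen_thickening.isClosed_compl.preimage hx)
  have hbS : b ∈ S := ⟨⟨hab, le_rfl⟩, fun h => hb (Metric.thickening_subset_cthickening ε K h)⟩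
  have hSne : S.Nonempty := ⟨b, hbS⟩
  have hbdd : BddBelow S := ⟨a, fun s hs => hs.1.1⟩
  set b' := sInf S with hb'
  have hb'S : b' ∈ S := hSc.csInf_mem hSne hbdd
  have hb'ab : b' ∈ Icc a b := hb'S.1
  have haS : a ∉ S := fun h => h.2 (Metric.self_subset_thickening hε K ha)
  have hab' : a < b' := lt_of_le_of_ne hb'ab.1 fun h => haS (h ▸ hb'S)
  have hlt : ∀ s ∈ Ico a b', x s ∈ Metric.thickening ε K := by
    intro s hs
    by_contra hcon
    exact absurd (csInf_le hbdd ⟨⟨hs.1, hs.2.le.trans hb'ab.2⟩, hcon⟩) (not_le.mpr hs.2)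
  have hend : x b' ∈ Metric.cthickening ε K := by
    have h1 : b' ∈ closure (Ico a b') := by
      rw [closure_Ico hab'.ne]
      exact ⟨hab'.le, le_rfl⟩
    have h2 : x b' ∈ closure (x '' Ico a b') :=
      image_closure_subset_closure_image hx ⟨b', h1, rfl⟩
    have h3 : x '' Ico a b' ⊆ Metric.thickening ε K := by
      rintro _ ⟨t, ht, rfl⟩; exact hlt t ht
    exact Metric.closure_thickening_subset_cthickening ε K (closure_mono h3 h2)
  have hmem : ∀ s ∈ Icc a b', x s ∈ Metric.cthickening ε K := by
    intro s hs
    rcases eq_or_lt_of_le hs.2 with h | h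
    · rw [h]; exact hend
    · exact Metric.thickening_subset_cthickening ε K (hlt s ⟨hs.1, h⟩)
  have hd1 : ε ≤ Metric.infDist (x b') K := by
    by_contra h
    exact hb'S.2 ((Metric.mem_thickening_iff_infDist_lt hK).mpr (not_le.mp h))
  have hd2 : ε ≤ ‖x b' - x a‖ := by
    have h5 : Metric.infDist (x b') K ≤ Metric.infDist (x a) K + dist (x b') (x a) :=
      Metric.infDist_le_infDist_add_dist
    rw [Metric.infDist_zero_of_mem ha, zero_add, dist_eq_norm] at h5
    exact hd1.trans h5
  exact ⟨b', ⟨hab', hb'ab.2⟩, hmem, hd2⟩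

private lemma hess_lb {n : ℕ} {Ω : Set (Fin n → ℝ)} (hΩo : IsOpen Ω)
    {Ψ : (Fin n → ℝ) → ℝ} (hΨ : ContDiffOn ℝ 2 Ψ Ω)
    (hconv : ∀ x ∈ Ω, ∀ u : Fin n → ℝ, u ≠ 0 → 0 < hessForm Ψ x u)
    (hn : 0 < n) {K : Set (Fin n → ℝ)} (hKc : IsCompact K) (hKne : K.Nonempty)
    (hKΩ : K ⊆ Ω) :
    ∃ c : ℝ, 0 < c ∧ ∀ z ∈ K, ∀ u : Fin n → ℝ, c * ‖u‖ ^ 2 ≤ hessForm Ψ z u := by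
  haveI : Nonempty (Fin n) := ⟨⟨0, hn⟩⟩
  have hc1 : ContDiffOn ℝ 1 (fun z => fderiv ℝ Ψ z) Ω :=
    hΨ.fderiv_of_isOpen hΩo (by norm_num)
  have hcoef : ∀ i j : Fin n, ContinuousOn
      (fun z => fderiv ℝ (fun w => fderiv ℝ Ψ w (Pi.single i 1)) z (Pi.single j 1)) Ω := by
    intro i j
    have h2 : ContDiffOn ℝ 1 (fun w => fderiv ℝ Ψ w (Pi.single i 1)) Ω :=
      hc1.clm_apply contDiffOn_const
    have h3 : ContinuousOn (fun z => fderiv ℝ (fun w => fderiv ℝ Ψ w (Pi.single i 1)) z) Ω :=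
      (ContDiffOn.fderiv_of_isOpen (m := 0) h2 hΩo (by norm_num)).continuousOn
    exact h3.clm_apply continuousOn_const
  have hF : ContinuousOn (fun p : (Fin n → ℝ) × (Fin n → ℝ) => hessForm Ψ p.1 p.2)
      (Ω ×ˢ (univ : Set (Fin n → ℝ))) := by
    unfold hessForm
    refine continuousOn_finset_sum _ fun i _ => continuousOn_finset_sum _ fun j _ => ?_
    refine ContinuousOn.mul (ContinuousOn.mul ?_ ?_) ?_
    · exact ((continuous_apply i).comp continuous_snd).continuousOn
    · exact ((continuous_apply j).comp continuous_snd).continuousOn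
    · exact (hcoef i j).comp continuous_fst.continuousOn fun p hp => hp.1
  have hScomp : IsCompact (K ×ˢ Metric.sphere (0 : Fin n → ℝ) 1) :=
    hKc.prod (isCompact_sphere _ _)
  have hSne : (K ×ˢ Metric.sphere (0 : Fin n → ℝ) 1).Nonempty :=
    hKne.prod (NormedSpace.sphere_nonempty.mpr zero_le_one)
  have hSsub : K ×ˢ Metric.sphere (0 : Fin n → ℝ) 1 ⊆ Ω ×ˢ univ :=
    prod_mono hKΩ (subset_univ _)
  obtain ⟨p₀, hp₀S, hp₀min⟩ := hScomp.exists_isMinOn hSne (hF.mono hSsub)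
  have hu₀ : ‖p₀.2‖ = 1 := mem_sphere_zero_iff_norm.mp hp₀S.2
  have hu₀ne : p₀.2 ≠ 0 := by
    intro h; rw [h] at hu₀; simp at hu₀
  have hcpos : 0 < hessForm Ψ p₀.1 p₀.2 := hconv p₀.1 (hKΩ hp₀S.1) p₀.2 hu₀ne
  refine ⟨hessForm Ψ p₀.1 p₀.2, hcpos, fun z hz u => ?_⟩
  rcases eq_or_ne u 0 with rfl | hu
  · simp [hessForm_zero]
  · have hnu : ‖u‖ ≠ 0 := norm_ne_zero_iff.mpr hu
    have hvnorm : ‖(‖u‖⁻¹ • u : Fin n → ℝ)‖ = 1 := by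
      rw [norm_smul, norm_inv, norm_norm, inv_mul_cancel₀ hnu]
    have hmin : hessForm Ψ p₀.1 p₀.2 ≤ hessForm Ψ z (‖u‖⁻¹ • u) :=
      isMinOn_iff.mp hp₀min (z, ‖u‖⁻¹ • u) ⟨hz, mem_sphere_zero_iff_norm.mpr hvnorm⟩
    have huv : u = ‖u‖ • (‖u‖⁻¹ • u) := by
      rw [smul_smul, mul_inv_cancel₀ hnu, one_smul]
    calc hessForm Ψ p₀.1 p₀.2 * ‖u‖ ^ 2
        ≤ hessForm Ψ z (‖u‖⁻¹ • u) * ‖u‖ ^ 2 :=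
          mul_le_mul_of_nonneg_right hmin (by positivity)
      _ = ‖u‖ ^ 2 * hessForm Ψ z (‖u‖⁻¹ • u) := mul_comm _ _
      _ = hessForm Ψ z (‖u‖ • (‖u‖⁻¹ • u)) := (hessForm_smul Ψ z _ _).symm
      _ = hessForm Ψ z u := by rw [← huv]

private lemma tail_small (f : ℝ → ENNReal) (hf : ∫⁻ s in Ioi (0:ℝ), f s ≠ ⊤)
    {η : ENNReal} (hη : 0 < η) : ∃ N : ℕ, ∫⁻ s in Ioi ((N:ℝ)), f s < η := by
  have hU : ∀ N : ℕ, (⋃ k : ℕ, Ioc (((N + k : ℕ)) : ℝ) (((N + k : ℕ)) + 1)) = Ioi (N : ℝ) := by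
    intro N
    ext t
    simp only [mem_iUnion, mem_Ioc, mem_Ioi]
    constructor
    · rintro ⟨k, h1, _⟩
      have : (N : ℝ) ≤ ((N + k : ℕ) : ℝ) := by
        push_cast; linarith [Nat.cast_nonneg (α := ℝ) k]
      linarith
    · intro ht
      have htpos : (0:ℝ) < t := lt_of_le_of_lt (Nat.cast_nonneg N) ht
      have h1 : 1 ≤ ⌈t⌉₊ := Nat.one_le_ceil_iff.mpr htpos
      have hNlt : N < ⌈t⌉₊ := Nat.lt_ceil.mpr ht
      refine ⟨⌈t⌉₊ - 1 - N, ?_, ?_⟩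
      · have he : (N + (⌈t⌉₊ - 1 - N) : ℕ) = ⌈t⌉₊ - 1 := by omega
        rw [he]
        have h2 : ((⌈t⌉₊ - 1 : ℕ) : ℝ) = (⌈t⌉₊ : ℝ) - 1 := by
          rw [Nat.cast_sub h1]; norm_num
        rw [h2]
        linarith [Nat.ceil_lt_add_one htpos.le]
      · have he : ((N + (⌈t⌉₊ - 1 - N) : ℕ) : ℝ) + 1 = ((⌈t⌉₊ : ℕ) : ℝ) := by
          rw [show ((N + (⌈t⌉₊ - 1 - N) : ℕ) : ℝ) + 1 = ((N + (⌈t⌉₊ - 1 - N) + 1 : ℕ) : ℝ) by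
            push_cast; ring]
          norm_cast
          omega
        rw [he]
        exact Nat.le_ceil t
  have hdisj : ∀ N : ℕ, Pairwise (Function.onFun Disjoint
      fun k : ℕ => Ioc (((N + k : ℕ)) : ℝ) (((N + k : ℕ)) + 1)) := by
    intro N k l hkl
    rw [Function.onFun, Set.Ioc_disjoint_Ioc]
    rcases hkl.lt_or_gt with h | h
    · refine (min_le_left _ _).trans (le_trans ?_ (le_max_right _ _))
      have : (k:ℝ) + 1 ≤ (l:ℝ) := by exact_mod_cast Nat.succ_le_of_lt h
      push_cast
      linarith
    · refine (min_le_right _ _).trans (le_trans ?_ (le_max_left _ _))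
      have : (l:ℝ) + 1 ≤ (k:ℝ) := by exact_mod_cast Nat.succ_le_of_lt h
      push_cast
      linarith
  set g : ℕ → ENNReal := fun k => ∫⁻ s in Ioc ((k : ℕ) : ℝ) (((k : ℕ)) + 1), f s with hg
  have hsum : ∀ N : ℕ, ∫⁻ s in Ioi ((N:ℝ)), f s = ∑' k : ℕ, g (N + k) := by
    intro N
    rw [← hU N, lintegral_iUnion (fun k => measurableSet_Ioc) (hdisj N)]
  have hgsum : ∑' k, g k ≠ ⊤ := by
    have h0 := hsum 0
    simp only [Nat.cast_zero, Nat.zero_add] at h0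
    rw [← h0]
    exact hf
  have htends : Filter.Tendsto (fun N : ℕ => ∑' k, g (k + N)) Filter.atTop (nhds 0) :=
    ENNReal.tendsto_sum_nat_add g hgsum
  obtain ⟨N, hN⟩ := (htends.eventually_lt_const hη).exists
  refine ⟨N, ?_⟩
  rw [hsum N]
  rw [show (fun k => g (N + k)) = fun k => g (k + N) from funext fun k => by rw [Nat.add_comm]]
  exact hN

/-- If the Hessian metric `g = D²Ψ` of a `C²` strongly convex potential `Ψ` on a
convex open domain `Ω ⊆ ℝⁿ` is complete, then the Kähler Sasaki metric on the tube
domain `TΩ = Ω × ℝⁿ` is complete. -/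
theorem tube_complete_of_base_complete {n : ℕ} (Ω : Set (Fin n → ℝ))
    (hΩo : IsOpen Ω) (hΩc : Convex ℝ Ω) (Ψ : (Fin n → ℝ) → ℝ)
    (hΨ : ContDiffOn ℝ 2 Ψ Ω)
    (hconv : ∀ x ∈ Ω, ∀ u : Fin n → ℝ, u ≠ 0 → 0 < hessForm Ψ x u)
    (hbase : HessianComplete Ω Ψ) :
    TubeComplete Ω Ψ := by
  intro x y hx hy hxΩ hesc
  rcases Nat.eq_zero_or_pos n with h0 | hn
  · subst h0
    obtain ⟨T, hT⟩ := hesc {(x 0, y 0)} isCompact_singleton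
      (singleton_subset_iff.mpr ⟨hxΩ 0 le_rfl, mem_univ _⟩)
    have heq : (x (max T 0), y (max T 0)) = (x 0, y 0) :=
      Prod.ext (funext fun i => i.elim0) (funext fun i => i.elim0)
    exact absurd (mem_singleton_iff.mpr heq) (hT _ (le_max_left T 0))
  by_contra hfin
  set f : ℝ → ENNReal := fun s => ENNReal.ofReal (Real.sqrt
      (hessForm Ψ (x s) (deriv x s) + hessForm Ψ (x s) (deriv y s))) with hfdef
  have hnn : ∀ s : ℝ, 0 ≤ s →
      0 ≤ hessForm Ψ (x s) (deriv x s) ∧ 0 ≤ hessForm Ψ (x s) (deriv y s) :=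
    fun s hs => ⟨hessForm_nonneg hconv (hxΩ s hs) _, hessForm_nonneg hconv (hxΩ s hs) _⟩
  -- the x-part of the length is finite
  have hxlen : ∫⁻ s in Ioi (0:ℝ),
      ENNReal.ofReal (Real.sqrt (hessForm Ψ (x s) (deriv x s))) ≠ ⊤ := by
    intro htop
    apply hfin
    refine top_le_iff.mp ?_
    rw [← htop]
    refine lintegral_mono_ae ?_
    rw [ae_restrict_iff' measurableSet_Ioi]
    refine Filter.Eventually.of_forall fun s hs => ?_
    exact ENNReal.ofReal_le_ofReal
      (Real.sqrt_le_sqrt (le_add_of_nonneg_right (hnn s (le_of_lt hs)).2))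
  -- therefore x does not escape the compacts of Ω
  have hnesc : ¬ EscapesCompacts Ω x := fun he => hxlen (hbase x hx hxΩ he)
  rw [EscapesCompacts] at hnesc
  push_neg at hnesc
  obtain ⟨K, hKc, hKΩ, hret⟩ := hnesc
  obtain ⟨sK, _, hsK⟩ := hret 0
  have hKne : K.Nonempty := ⟨x sK, hsK⟩
  obtain ⟨ε, hε, hKε⟩ := hKc.exists_cthickening_subset_open hΩo hKΩ
  have hK'c : IsCompact (Metric.cthickening ε K) := hKc.cthickening
  have hK'ne : (Metric.cthickening ε K).Nonempty :=
    hKne.mono (Metric.self_subset_cthickening K)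
  obtain ⟨c, hcpos, hcbound⟩ := hess_lb hΩo hΨ hconv hn hK'c hK'ne hKε
  have hsc : 0 < Real.sqrt c := Real.sqrt_pos.mpr hcpos
  have hbound : ∀ s : ℝ, 0 < s → x s ∈ Metric.cthickening ε K →
      ENNReal.ofReal (Real.sqrt c * ‖deriv x s‖) ≤ f s ∧
      ENNReal.ofReal (Real.sqrt c * ‖deriv y s‖) ≤ f s := by
    intro s hs hsK'
    have h1 := hcbound (x s) hsK' (deriv x s)
    have h2 := hcbound (x s) hsK' (deriv y s)
    obtain ⟨hn1, hn2⟩ := hnn s hs.le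
    constructor
    · apply ENNReal.ofReal_le_ofReal
      calc Real.sqrt c * ‖deriv x s‖ = Real.sqrt (c * ‖deriv x s‖ ^ 2) := by
            rw [Real.sqrt_mul hcpos.le, Real.sqrt_sq (norm_nonneg _)]
        _ ≤ _ := Real.sqrt_le_sqrt (by linarith)
    · apply ENNReal.ofReal_le_ofReal
      calc Real.sqrt c * ‖deriv y s‖ = Real.sqrt (c * ‖deriv y s‖ ^ 2) := by
            rw [Real.sqrt_mul hcpos.le, Real.sqrt_sq (norm_nonneg _)]
        _ ≤ _ := Real.sqrt_le_sqrt (by linarith)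
  obtain ⟨N, hN⟩ := tail_small f hfin
    (η := ENNReal.ofReal (Real.sqrt c * ε)) (ENNReal.ofReal_pos.mpr (mul_pos hsc hε))
  obtain ⟨s₀, hs₀ge, hs₀K⟩ := hret ((N:ℝ) + 1)
  have hNnn : (0:ℝ) ≤ (N:ℝ) := Nat.cast_nonneg N
  have hs₀pos : 0 < s₀ := by linarith
  -- after time s₀ the base curve stays in the cthickening
  have hstay : ∀ s : ℝ, s₀ ≤ s → x s ∈ Metric.cthickening ε K := by
    intro b hb
    by_contra hbK'
    obtain ⟨b', hb'mem, hb'in, hb'dist⟩ :=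
      excursion K hKne hε x hx.continuous hb hs₀K hbK'
    have hlen : ENNReal.ofReal (Real.sqrt c * ‖x b' - x s₀‖) ≤ ∫⁻ s in Ioc s₀ b', f s := by
      refine length_lb x hx f (Real.sqrt c) s₀ b' hsc.le hb'mem.1.le fun s hs => ?_
      obtain ⟨hs1, hs2⟩ := hs
      exact (hbound s (by linarith) (hb'in s ⟨hs1.le, hs2⟩)).1
    have hchain : ENNReal.ofReal (Real.sqrt c * ε) ≤ ∫⁻ s in Ioi ((N:ℝ)), f s := by
      refine le_trans (ENNReal.ofReal_le_ofReal
        (mul_le_mul_of_nonneg_left hb'dist hsc.le)) (le_trans hlen (lintegral_mono_set ?_))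
      intro s hs
      obtain ⟨hs1, _⟩ := hs
      exact mem_Ioi.mpr (by linarith)
    exact absurd hchain (not_le.mpr hN)
  -- the y-part forces infinite length
  have hIlow : ∀ R : ℝ, ENNReal.ofReal (Real.sqrt c * (R - ‖y s₀‖))
      ≤ ∫⁻ s in Ioi (0:ℝ), f s := by
    intro R
    obtain ⟨T, hT⟩ := hesc (Metric.cthickening ε K ×ˢ Metric.closedBall 0 R)
      (hK'c.prod (isCompact_closedBall _ _)) (prod_mono hKε (subset_univ _))
    have hts₀ : s₀ ≤ max s₀ T := le_max_left _ _
    have hyt : R < ‖y (max s₀ T)‖ := by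
      have h1 := hT (max s₀ T) (le_max_right _ _)
      have h2 : x (max s₀ T) ∈ Metric.cthickening ε K := hstay _ hts₀
      by_contra h
      exact h1 ⟨h2, by simpa [Metric.mem_closedBall, dist_zero_right] using not_lt.mp h⟩
    have hlen : ENNReal.ofReal (Real.sqrt c * ‖y (max s₀ T) - y s₀‖)
        ≤ ∫⁻ s in Ioc s₀ (max s₀ T), f s := by
      refine length_lb y hy f (Real.sqrt c) s₀ (max s₀ T) hsc.le hts₀ fun s hs => ?_
      obtain ⟨hs1, hs2⟩ := hs
      exact (hbound s (by linarith) (hstay s hs1.le)).2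
    refine le_trans (ENNReal.ofReal_le_ofReal ?_) (le_trans hlen (lintegral_mono_set ?_))
    · refine mul_le_mul_of_nonneg_left ?_ hsc.le
      have := norm_sub_norm_le (y (max s₀ T)) (y s₀)
      linarith
    · intro s hs
      obtain ⟨hs1, _⟩ := hs
      exact mem_Ioi.mpr (by linarith)
  have h1 := hIlow (‖y s₀‖ + ((∫⁻ s in Ioi (0:ℝ), f s).toReal + 1) / Real.sqrt c)
  rw [show Real.sqrt c * (‖y s₀‖ + ((∫⁻ s in Ioi (0:ℝ), f s).toReal + 1) / Real.sqrt c - ‖y s₀‖)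
      = (∫⁻ s in Ioi (0:ℝ), f s).toReal + 1 by
    rw [add_sub_cancel_left, mul_comm, div_mul_cancel₀ _ hsc.ne']] at h1
  have h2 : (∫⁻ s in Ioi (0:ℝ), f s)
      < ENNReal.ofReal ((∫⁻ s in Ioi (0:ℝ), f s).toReal + 1) := by
    conv_lhs => rw [← ENNReal.ofReal_toReal hfin]
    exact (ENNReal.ofReal_lt_ofReal_iff (by positivity)).mpr (lt_add_one _)
  exact absurd h1 (not_le.mpr h2)
end

section
/- Let $\phi$ be a smooth strictly convex radial potential on the ball $B_a \subseteq \mathbb{R}^n$, $0 < a \le \infty$, with $f(r) = \phi'(r)/r$ and $h(r) = f(r) + r f'(r)$, both positive on $[0,a)$. Then the rotationally symmetric Hessian metric $g_{\Psi}$ with $\Psi(x) = \phi(|x|)$ is complete if and only if $\int_0^a \sqrt{h(r)}\, dr = \infty$. -/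
open Set MeasureTheory ENNReal

/-- Euclidean radius of `x`. -/
noncomputable def rad {n : ℕ} (x : Fin n → ℝ) : ℝ := Real.sqrt (∑ i, x i ^ 2)

/-- The rotationally symmetric Hessian metric `Ψ_{ij} = f δ_{ij} + (f'/r) xᵢxⱼ`
(with `fdot = f'/r`) as a quadratic form at `x` applied to `u`. -/
noncomputable def rotForm {n : ℕ} (f fdot : ℝ → ℝ) (x u : Fin n → ℝ) : ℝ :=
  f (rad x) * (∑ i, u i ^ 2) + fdot (rad x) * (∑ i, x i * u i) ^ 2

/-- Completeness of the rotationally symmetric Hessian metric on the ball of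
radius `a` (`a = ⊤` allowed): every `C¹` curve in the ball escaping all compact
subsets has infinite length. -/
def RotComplete (n : ℕ) (a : ℝ≥0∞) (f fdot : ℝ → ℝ) : Prop :=
  ∀ γ : ℝ → (Fin n → ℝ), ContDiff ℝ 1 γ →
    (∀ s, 0 ≤ s → ENNReal.ofReal (rad (γ s)) < a) →
    EscapesCompacts {x : Fin n → ℝ | ENNReal.ofReal (rad x) < a} γ →
    ∫⁻ s in Ioi (0:ℝ),
      ENNReal.ofReal (Real.sqrt (rotForm f fdot (γ s) (deriv γ s))) = ⊤

lemma rad_nonneg {n : ℕ} (x : Fin n → ℝ) : 0 ≤ rad x := Real.sqrt_nonneg _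

lemma rad_continuous {n : ℕ} : Continuous (rad (n := n)) :=
  Real.continuous_sqrt.comp (continuous_finset_sum _ fun i _ => (continuous_apply i).pow 2)

lemma rad_sq {n : ℕ} (x : Fin n → ℝ) : rad x ^ 2 = ∑ i, x i ^ 2 :=
  Real.sq_sqrt (Finset.sum_nonneg fun i _ => sq_nonneg _)

lemma abs_le_rad {n : ℕ} (x : Fin n → ℝ) (j : Fin n) : |x j| ≤ rad x := by
  rw [← Real.sqrt_sq_eq_abs]
  exact Real.sqrt_le_sqrt (Finset.single_le_sum (fun i _ => sq_nonneg (x i)) (Finset.mem_univ j))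

lemma rad_smul_single {n : ℕ} (j : Fin n) (c : ℝ) (hc : 0 ≤ c) :
    rad (c • (Pi.single j 1 : Fin n → ℝ)) = c := by
  rw [rad]
  have : ∑ i, (c • (Pi.single j 1 : Fin n → ℝ)) i ^ 2 = c ^ 2 := by
    simp [Pi.single_apply, mul_ite, Finset.sum_ite_eq']
  rw [this, Real.sqrt_sq hc]

lemma rotForm_single {n : ℕ} (f fdot : ℝ → ℝ) (j : Fin n) (c v : ℝ) (hc : 0 ≤ c) :
    rotForm f fdot (c • (Pi.single j 1 : Fin n → ℝ)) (v • (Pi.single j 1 : Fin n → ℝ))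
      = (f c + c ^ 2 * fdot c) * v ^ 2 := by
  rw [rotForm, rad_smul_single j c hc]
  have h1 : ∑ i, (v • (Pi.single j 1 : Fin n → ℝ)) i ^ 2 = v ^ 2 := by
    simp [Pi.single_apply, mul_ite, Finset.sum_ite_eq']
  have h2 : ∑ i, (c • (Pi.single j 1 : Fin n → ℝ)) i * (v • (Pi.single j 1 : Fin n → ℝ)) i = c * v := by
    simp [Pi.single_apply, mul_ite, Finset.sum_ite_eq']
  rw [h1, h2]
  ring

/-- Key pointwise inequality: the metric dominates the radial part. -/
lemma radial_le_rotForm {n : ℕ} (f fdot : ℝ → ℝ) (x u : Fin n → ℝ)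
    (hx : 0 < rad x) (hf : 0 ≤ f (rad x)) :
    (f (rad x) + rad x ^ 2 * fdot (rad x)) * ((∑ i, x i * u i) / rad x) ^ 2
      ≤ rotForm f fdot x u := by
  set r := rad x with hr
  set P := ∑ i, x i * u i with hP
  have hCS : P ^ 2 ≤ (∑ i, x i ^ 2) * ∑ i, u i ^ 2 :=
    Finset.sum_mul_sq_le_sq_mul_sq _ _ _
  rw [← rad_sq] at hCS
  have hr2 : (0:ℝ) < r ^ 2 := by positivity
  have key : P ^ 2 / r ^ 2 ≤ ∑ i, u i ^ 2 := by
    rw [div_le_iff₀ hr2]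
    calc P ^ 2 ≤ r ^ 2 * ∑ i, u i ^ 2 := hCS
    _ = (∑ i, u i ^ 2) * r ^ 2 := by ring
  have : (f r + r ^ 2 * fdot r) * (P / r) ^ 2
      = f r * (P ^ 2 / r ^ 2) + fdot r * P ^ 2 := by
    field_simp
  rw [this, rotForm, ← hr, ← hP]
  have := mul_le_mul_of_nonneg_left key hf
  linarith

/-- Change of variables for lower integrals, 1D. -/
lemma lintegral_image_eq_lintegral_abs_deriv_mul {s : Set ℝ} {f f' : ℝ → ℝ}
    (hs : MeasurableSet s) (hf' : ∀ x ∈ s, HasDerivWithinAt f (f' x) s x)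
    (hf : Set.InjOn f s) (g : ℝ → ℝ≥0∞) :
    ∫⁻ x in f '' s, g x = ∫⁻ x in s, ENNReal.ofReal |f' x| * g (f x) := by
  simpa only [ContinuousLinearMap.det_toSpanSingleton] using
    lintegral_image_eq_lintegral_abs_det_fderiv_mul volume hs
      (fun x hx => (hf' x hx).hasFDerivWithinAt) hf g

/-- Lower integral over a monotone union bounded by a uniform bound. -/
lemma lintegral_union_le_of_monotone {F : ℝ → ℝ≥0∞} {U : Set ℝ} (hU : MeasurableSet U)
    (hF : AEMeasurable F (volume.restrict U)) {s : ℕ → Set ℝ}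
    (hmeas : ∀ k, MeasurableSet (s k)) (hmono : Monotone s) (hiU : (⋃ k, s k) = U)
    {Λ : ℝ≥0∞} (hk : ∀ k, ∫⁻ x in s k, F x ≤ Λ) : ∫⁻ x in U, F x ≤ Λ := by
  have hsub : ∀ k, s k ⊆ U := fun k => hiU ▸ subset_iUnion s k
  set g : ℕ → ℝ → ℝ≥0∞ := fun k => (s k).indicator F with hg
  have hgm : ∀ k, AEMeasurable (g k) (volume.restrict U) :=
    fun k => hF.indicator (hmeas k)
  have hmonog : ∀ᵐ x ∂(volume.restrict U), Monotone fun k => g k x := by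
    filter_upwards with x
    intro i j hij
    exact Set.indicator_le_indicator_of_subset (hmono hij) (fun _ => zero_le) x
  have hsup : ∀ x, (⨆ k, g k x) = U.indicator F x := by
    intro x
    by_cases hx : x ∈ U
    · rw [Set.indicator_of_mem hx]
      obtain ⟨k, hkx⟩ : ∃ k, x ∈ s k := by
        have := hiU ▸ hx; exact mem_iUnion.1 this
      apply le_antisymm
      · exact iSup_le fun k => Set.indicator_le_self _ _ x
      · exact le_iSup_of_le k (by rw [hg]; simp [Set.indicator_of_mem hkx])
    · have : ∀ k, g k x = 0 := fun k =>
        Set.indicator_of_notMem (fun hxk => hx (hsub k hxk)) _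
      simp [this, Set.indicator_of_notMem hx]
  have hkey := lintegral_iSup' hgm hmonog
  have hL : ∫⁻ x, ⨆ k, g k x ∂(volume.restrict U) = ∫⁻ x in U, F x := by
    rw [lintegral_congr_ae (g := F) ?_]
    · filter_upwards [ae_restrict_mem hU] with x hx
      rw [hsup x, Set.indicator_of_mem hx]
  rw [hL] at hkey
  rw [hkey]
  apply iSup_le
  intro k
  have : ∫⁻ x, g k x ∂(volume.restrict U) = ∫⁻ x in s k, F x := by
    rw [hg]
    simp only
    rw [lintegral_indicator (hmeas k), Measure.restrict_restrict (hmeas k),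
      Set.inter_eq_left.2 (hsub k)]
  rw [this]; exact hk k

lemma length_bound {n : ℕ} {a : ℝ≥0∞} {f fdot : ℝ → ℝ}
    (hf : ContDiffOn ℝ 1 f {r : ℝ | 0 ≤ r ∧ ENNReal.ofReal r < a})
    (hfd : ContinuousOn fdot {r : ℝ | 0 ≤ r ∧ ENNReal.ofReal r < a})
    (hfpos : ∀ r ∈ {r : ℝ | 0 ≤ r ∧ ENNReal.ofReal r < a}, 0 < f r)
    (hhpos : ∀ r ∈ {r : ℝ | 0 ≤ r ∧ ENNReal.ofReal r < a}, 0 < f r + r ^ 2 * fdot r)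
    (γ : ℝ → Fin n → ℝ) (hγ : ContDiff ℝ 1 γ)
    (hball : ∀ s, 0 ≤ s → ENNReal.ofReal (rad (γ s)) < a)
    (hesc : EscapesCompacts {x : Fin n → ℝ | ENNReal.ofReal (rad x) < a} γ)
    {c' b : ℝ} (hc' : 0 < c') (hρ0 : rad (γ 0) ≤ c') (hc'b : c' < b)
    (hb : ENNReal.ofReal b < a) :
    ∫⁻ r in Ioc c' b, ENNReal.ofReal (Real.sqrt (f r + r ^ 2 * fdot r))
      ≤ ∫⁻ s in Ioi (0:ℝ),
          ENNReal.ofReal (Real.sqrt (rotForm f fdot (γ s) (deriv γ s))) := by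
  set S := {r : ℝ | 0 ≤ r ∧ ENNReal.ofReal r < a} with hS
  set h : ℝ → ℝ := fun r => f r + r ^ 2 * fdot r with hh
  set ρ : ℝ → ℝ := fun s => rad (γ s) with hρ
  have hρcont : Continuous ρ := rad_continuous.comp hγ.continuous
  have hρS : ∀ s, 0 ≤ s → ρ s ∈ S := fun s hs => ⟨rad_nonneg _, hball s hs⟩
  -- continuity of h on S
  have hhcont : ContinuousOn h S := by
    apply (hf.continuousOn.add _)
    exact (continuousOn_id.pow 2).mul hfd
  -- the compact set of radius ≤ b
  have hKcl : IsClosed {x : Fin n → ℝ | rad x ≤ b} :=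
    isClosed_le rad_continuous continuous_const
  have hKcp : IsCompact {x : Fin n → ℝ | rad x ≤ b} := by
    refine (isCompact_closedBall (0 : Fin n → ℝ) b).of_isClosed_subset hKcl ?_
    intro x hx
    rw [Metric.mem_closedBall, dist_zero_right]
    refine (pi_norm_le_iff_of_nonneg (le_trans (rad_nonneg x) hx)).2 fun i => ?_
    exact le_trans (abs_le_rad x i) hx
  obtain ⟨T₀, hT₀⟩ := hesc _ hKcp (fun x hx =>
    lt_of_le_of_lt (ENNReal.ofReal_le_ofReal hx) hb)
  set T : ℝ := max T₀ 0 with hT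
  have hT0 : (0:ℝ) ≤ T := le_max_right _ _
  have hρT : b < ρ T := by
    have := hT₀ T (le_max_left _ _)
    simpa [hρ] using lt_of_not_ge (fun hle => this hle)
  -- upper bound M'
  obtain ⟨sM, hsM, hsMmax⟩ := isCompact_Icc.exists_isMaxOn (Set.nonempty_Icc.2 hT0)
    (hρcont.continuousOn (s := Icc 0 T))
  have hmax_lt : ENNReal.ofReal (max (ρ sM) b) < a := by
    rcases max_cases (ρ sM) b with ⟨heq, _⟩ | ⟨heq, _⟩ <;> rw [heq]
    · exact hball sM hsM.1
    · exact hb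
  obtain ⟨M', hM'0, hltM', hM'a⟩ := ENNReal.lt_iff_exists_real_btwn.1 hmax_lt
  have hmaxM' : max (ρ sM) b < M' :=
    (ENNReal.ofReal_lt_ofReal_iff_of_nonneg (le_max_of_le_right (hc'.le.trans hc'b.le))).1 hltM'
  have hbM' : b < M' := lt_of_le_of_lt (le_max_right _ _) hmaxM'
  have hρM' : ∀ s ∈ Icc (0:ℝ) T, ρ s < M' := fun s hs =>
    lt_of_le_of_lt (le_trans (hsMmax hs) (le_max_left _ _)) hmaxM'
  have hIccS : Icc (0:ℝ) M' ⊆ S := fun t ht =>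
    ⟨ht.1, lt_of_le_of_lt (ENNReal.ofReal_le_ofReal ht.2) hM'a⟩
  -- the set A and s₁
  set A : Set ℝ := Icc (0:ℝ) T ∩ {s | ρ s ≤ c'} with hA
  have hAcl : IsClosed A := isClosed_Icc.inter (isClosed_le hρcont continuous_const)
  have hAcp : IsCompact A := isCompact_Icc.of_isClosed_subset hAcl inter_subset_left
  have hAne : A.Nonempty := ⟨0, ⟨le_rfl, hT0⟩, by simpa [hρ] using hρ0⟩
  set s₁ : ℝ := sSup A with hs₁
  have hs₁A : s₁ ∈ A := hAcp.sSup_mem hAne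
  have hs₁0 : 0 ≤ s₁ := hs₁A.1.1
  have hs₁T : s₁ < T := by
    rcases lt_or_eq_of_le hs₁A.1.2 with hlt | heq
    · exact hlt
    · exfalso; have := hs₁A.2; rw [heq] at this
      exact absurd hρT (not_lt.2 (le_trans this hc'b.le))
  have hAbove : ∀ s ∈ Ioc s₁ T, c' < ρ s := by
    intro s hs
    by_contra hle
    have hsA : s ∈ A := ⟨⟨le_trans hs₁0 hs.1.le, hs.2⟩, not_lt.1 hle⟩
    exact absurd (le_csSup hAcp.bddAbove hsA) (not_le.2 hs.1)
  have hρs₁ : ρ s₁ = c' := by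
    refine le_antisymm hs₁A.2 ?_
    have htend : Filter.Tendsto ρ (nhdsWithin s₁ (Ioi s₁)) (nhds (ρ s₁)) :=
      (hρcont.tendsto s₁).mono_left nhdsWithin_le_nhds
    refine ge_of_tendsto htend ?_
    filter_upwards [Ioc_mem_nhdsGT_of_mem ⟨le_rfl, hs₁T⟩] with s hs
    exact (hAbove s hs).le
  -- the primitive G of √h
  have hM'pos : 0 < M' := lt_trans (lt_trans hc' hc'b) hbM'
  have hsqrth_cont : ContinuousOn (fun t => Real.sqrt (h t)) (Icc 0 M') :=
    Real.continuous_sqrt.comp_continuousOn (hhcont.mono hIccS)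
  set G : ℝ → ℝ := fun r => ∫ t in (0:ℝ)..r, Real.sqrt (h t) with hG
  have hGcont : ContinuousOn G (Icc 0 M') := by
    have := intervalIntegral.continuousOn_primitive_interval (a := (0:ℝ)) (b := M')
      (μ := volume) (f := fun t => Real.sqrt (h t)) ?_
    · rwa [uIcc_of_le hM'pos.le] at this
    · rw [uIcc_of_le hM'pos.le]
      exact hsqrth_cont.integrableOn_compact isCompact_Icc
  -- derivative of ρ
  have hγd : Differentiable ℝ γ := hγ.differentiable one_ne_zero
  set P : ℝ → ℝ := fun s => ∑ i, γ s i * deriv γ s i with hP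
  have hcoord : ∀ (s : ℝ) (i : Fin n), HasDerivAt (fun s' => γ s' i) (deriv γ s i) s := by
    intro s i
    have h1 : HasDerivAt γ (deriv γ s) s := (hγd s).hasDerivAt
    exact (ContinuousLinearMap.proj (R := ℝ) (φ := fun _ : Fin n => ℝ)
      i).hasFDerivAt.comp_hasDerivAt s h1
  have hρderiv : ∀ s, 0 < ρ s → HasDerivAt ρ (P s / ρ s) s := by
    intro s hs
    have hq : HasDerivAt (fun s' => ∑ i, γ s' i ^ 2) (2 * P s) s := by
      have := HasDerivAt.fun_sum (fun i (_ : i ∈ Finset.univ) => (hcoord s i).pow 2)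
      refine this.congr_deriv ?_
      rw [hP, Finset.mul_sum]
      exact Finset.sum_congr rfl fun i _ => by ring
    have hqne : (∑ i, γ s i ^ 2) ≠ 0 := by
      have : 0 < ∑ i, γ s i ^ 2 := by
        rw [← rad_sq]; exact pow_pos hs 2
      exact this.ne'
    have hsq := (Real.hasDerivAt_sqrt hqne).comp s hq
    have heq : ρ = (fun x => Real.sqrt x) ∘ fun s' => ∑ i, γ s' i ^ 2 := rfl
    rw [heq]
    refine hsq.congr_deriv ?_
    field_simp
    change P s = ρ s * P s * (ρ s)⁻¹
    field_simp [hs.ne']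
  -- derivative of F = G ∘ ρ
  have hFderiv : ∀ s ∈ Ioo s₁ T,
      HasDerivAt (fun s' => G (ρ s')) (Real.sqrt (h (ρ s)) * (P s / ρ s)) s := by
    intro s hs
    have hρms : ρ s ∈ Ioo (0:ℝ) M' :=
      ⟨lt_trans hc' (hAbove s ⟨hs.1, hs.2.le⟩),
        hρM' s ⟨le_trans hs₁0 hs.1.le, hs.2.le⟩⟩
    have hGd : HasDerivAt G (Real.sqrt (h (ρ s))) (ρ s) := by
      apply intervalIntegral.integral_hasDerivAt_right
      · exact (hsqrth_cont.mono (by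
          rw [uIcc_of_le hρms.1.le]
          exact Icc_subset_Icc le_rfl hρms.2.le)).intervalIntegrable
      · exact (hsqrth_cont.mono Ioo_subset_Icc_self).stronglyMeasurableAtFilter
          isOpen_Ioo _ hρms
      · exact (hsqrth_cont.mono Ioo_subset_Icc_self).continuousAt
          (isOpen_Ioo.mem_nhds hρms)
    exact hGd.comp s (hρderiv s hρms.1)
  -- pointwise inequality
  set g : ℝ → ℝ := fun s => Real.sqrt (rotForm f fdot (γ s) (deriv γ s)) with hg
  have hineq : ∀ s ∈ Ioo s₁ T, Real.sqrt (h (ρ s)) * (P s / ρ s) ≤ g s := by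
    intro s hs
    have hs0 : 0 ≤ s := le_trans hs₁0 hs.1.le
    have hρpos : 0 < ρ s := lt_trans hc' (hAbove s ⟨hs.1, hs.2.le⟩)
    have hmem : ρ s ∈ S := hρS s hs0
    have hfpos' := hfpos _ hmem
    have hhpos' := hhpos _ hmem
    have hkey := radial_le_rotForm f fdot (γ s) (deriv γ s) hρpos hfpos'.le
    rcases le_or_gt (P s / ρ s) 0 with hd | hd
    · exact le_trans (mul_nonpos_of_nonneg_of_nonpos (Real.sqrt_nonneg _) hd)
        (Real.sqrt_nonneg _)
    · have hR0 : 0 ≤ rotForm f fdot (γ s) (deriv γ s) :=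
        le_trans (mul_nonneg hhpos'.le (sq_nonneg _)) hkey
      rw [hg]
      rw [Real.le_sqrt (by positivity) hR0]
      calc (Real.sqrt (h (ρ s)) * (P s / ρ s)) ^ 2
          = h (ρ s) * (P s / ρ s) ^ 2 := by
            rw [mul_pow, Real.sq_sqrt hhpos'.le]
      _ ≤ rotForm f fdot (γ s) (deriv γ s) := hkey
  -- continuity and integrability of g
  have hdγcont : Continuous (deriv γ) := hγ.continuous_deriv le_rfl
  have hgcont : ContinuousOn g (Icc 0 T) := by
    have hQ : Continuous fun s => ∑ i, deriv γ s i ^ 2 :=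
      continuous_finset_sum _ fun i _ => ((continuous_apply i).comp hdγcont).pow 2
    have hPc : Continuous fun s => ∑ i, γ s i * deriv γ s i :=
      continuous_finset_sum _ fun i _ =>
        ((continuous_apply i).comp hγ.continuous).mul ((continuous_apply i).comp hdγcont)
    have hmapsTo : MapsTo ρ (Icc 0 T) S := fun s hs => hρS s hs.1
    have h1 : ContinuousOn (fun s => f (ρ s)) (Icc 0 T) :=
      hf.continuousOn.comp hρcont.continuousOn hmapsTo
    have h2 : ContinuousOn (fun s => fdot (ρ s)) (Icc 0 T) :=
      hfd.comp hρcont.continuousOn hmapsTo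
    exact Real.continuous_sqrt.comp_continuousOn
      ((h1.mul hQ.continuousOn).add (h2.mul (hPc.continuousOn.pow 2)))
  have hgint : IntegrableOn g (Icc s₁ T) volume :=
    (hgcont.mono (Icc_subset_Icc hs₁0 le_rfl)).integrableOn_compact isCompact_Icc
  -- comparison of F with the length integral
  have hsub : G (ρ T) - G c' ≤ ∫ y in s₁..T, g y := by
    have hcontF : ContinuousOn (fun s' => G (ρ s')) (Icc s₁ T) := by
      refine hGcont.comp hρcont.continuousOn fun s hs => ?_
      exact ⟨rad_nonneg _, (hρM' s ⟨le_trans hs₁0 hs.1, hs.2⟩).le⟩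
    have := intervalIntegral.sub_le_integral_of_hasDeriv_right_of_le hs₁T.le hcontF
      (fun x hx => (hFderiv x hx).hasDerivWithinAt) hgint hineq
    rwa [hρs₁] at this
  -- interval integrability of √h between 0 and M'
  have hintAll : ∀ {x y : ℝ}, 0 ≤ x → x ≤ y → y ≤ M' →
      IntervalIntegrable (fun t => Real.sqrt (h t)) volume x y := by
    intro x y hx hxy hy
    exact (hsqrth_cont.mono (by
      rw [uIcc_of_le hxy]
      exact Icc_subset_Icc hx hy)).intervalIntegrable
  have hρTM' : ρ T ≤ M' := (hρM' T ⟨hT0, le_rfl⟩).le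
  have hGb : ∫ t in c'..b, Real.sqrt (h t) ≤ G (ρ T) - G c' := by
    have heq1 : G (ρ T) - G c' = ∫ t in c'..ρ T, Real.sqrt (h t) :=
      intervalIntegral.integral_interval_sub_left
        (hintAll le_rfl (le_trans hc'.le (le_trans hc'b.le hρT.le)) hρTM')
        (hintAll le_rfl hc'.le (le_trans hc'b.le (le_trans hρT.le hρTM')))
    have heq2 : (∫ t in c'..b, Real.sqrt (h t)) + ∫ t in b..ρ T, Real.sqrt (h t)
        = ∫ t in c'..ρ T, Real.sqrt (h t) :=
      intervalIntegral.integral_add_adjacent_intervals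
        (hintAll hc'.le hc'b.le (le_trans hρT.le hρTM'))
        (hintAll (le_trans hc'.le hc'b.le) hρT.le hρTM')
    have hnn : 0 ≤ ∫ t in b..ρ T, Real.sqrt (h t) :=
      intervalIntegral.integral_nonneg hρT.le fun u _ => Real.sqrt_nonneg _
    rw [heq1, ← heq2]
    linarith
  -- final chain in ℝ≥0∞
  have hIntcb : IntegrableOn (fun t => Real.sqrt (h t)) (Ioc c' b) volume :=
    ((hsqrth_cont.mono (Icc_subset_Icc hc'.le hbM'.le)).integrableOn_compact
      isCompact_Icc).mono_set Ioc_subset_Icc_self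
  have hgint' : IntegrableOn g (Ioc s₁ T) volume := hgint.mono_set Ioc_subset_Icc_self
  calc ∫⁻ r in Ioc c' b, ENNReal.ofReal (Real.sqrt (h r))
      = ENNReal.ofReal (∫ r in Ioc c' b, Real.sqrt (h r)) := by
        rw [ofReal_integral_eq_lintegral_ofReal hIntcb
          (ae_of_all _ fun x => Real.sqrt_nonneg _)]
    _ ≤ ENNReal.ofReal (∫ y in s₁..T, g y) := by
        apply ENNReal.ofReal_le_ofReal
        rw [← intervalIntegral.integral_of_le (le_trans hc'b.le le_rfl)]
        exact le_trans hGb hsub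
    _ = ∫⁻ s in Ioc s₁ T, ENNReal.ofReal (g s) := by
        rw [intervalIntegral.integral_of_le hs₁T.le,
          ofReal_integral_eq_lintegral_ofReal hgint'
            (ae_of_all _ fun x => Real.sqrt_nonneg _)]
    _ ≤ ∫⁻ s in Ioi (0:ℝ), ENNReal.ofReal (g s) :=
        lintegral_mono_set fun x hx => lt_of_le_of_lt hs₁0 hx.1

lemma forward_dir (n : ℕ) (hn : 1 ≤ n) (a : ℝ≥0∞) (ha : 0 < a)
    (f fdot : ℝ → ℝ)
    (hhpos : ∀ r ∈ {r : ℝ | 0 ≤ r ∧ ENNReal.ofReal r < a}, 0 < f r + r ^ 2 * fdot r)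
    (hc : RotComplete n a f fdot) :
    ∫⁻ r in {r : ℝ | 0 < r ∧ ENNReal.ofReal r < a},
        ENNReal.ofReal (Real.sqrt (f r + r ^ 2 * fdot r)) = ⊤ := by
  by_contra Hfin
  set h : ℝ → ℝ := fun r => f r + r ^ 2 * fdot r with hh
  set j : Fin n := ⟨0, hn⟩ with hj
  set e : Fin n → ℝ := Pi.single j 1 with he
  rcases eq_or_ne a ⊤ with rfl | haT
  · -- infinite radius : use the straight line
    set γ : ℝ → Fin n → ℝ := fun s => s • e with hγdef
    have hγ : ContDiff ℝ 1 γ := contDiff_id.smul contDiff_const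
    have hdγ : ∀ s, deriv γ s = (1:ℝ) • e := by
      intro s
      exact (((hasDerivAt_id s).smul_const e).congr_deriv (by simp)).deriv
    have hball : ∀ s, 0 ≤ s → ENNReal.ofReal (rad (γ s)) < ⊤ :=
      fun s _ => ENNReal.ofReal_lt_top
    have hesc : EscapesCompacts {x : Fin n → ℝ | ENNReal.ofReal (rad x) < ⊤} γ := by
      intro K hK _
      obtain ⟨R, hR⟩ := hK.isBounded.exists_norm_le
      refine ⟨R + 1, fun s hs hsK => ?_⟩
      have h1 : |γ s j| ≤ ‖γ s‖ := norm_le_pi_norm (γ s) j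
      have h2 : γ s j = s := by simp [hγdef, he]
      have := hR _ hsK
      rw [h2] at h1
      have := le_abs_self s
      linarith
    have hlen := hc γ hγ hball hesc
    apply Hfin
    have hset : {r : ℝ | 0 < r ∧ ENNReal.ofReal r < ⊤} = Ioi (0:ℝ) := by
      ext r; simp [ENNReal.ofReal_lt_top]
    rw [hset, ← hlen]
    apply lintegral_congr_ae
    filter_upwards [ae_restrict_mem measurableSet_Ioi] with s hs
    rw [hdγ s]
    have : γ s = s • e := rfl
    rw [this, rotForm_single f fdot j s 1 (le_of_lt hs)]
    norm_num
  · -- finite radius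
    set A : ℝ := a.toReal with hA
    have hA0 : 0 < A := ENNReal.toReal_pos ha.ne' haT
    have haA : a = ENNReal.ofReal A := (ENNReal.ofReal_toReal haT).symm
    set ρ : ℝ → ℝ := fun s => A * s ^ 2 / (1 + s ^ 2) with hρdef
    set d : ℝ → ℝ := fun s => 2 * A * s / (1 + s ^ 2) ^ 2 with hd
    have hden : ∀ s : ℝ, (0:ℝ) < 1 + s ^ 2 := fun s => by positivity
    have hρd : ∀ s, HasDerivAt ρ (d s) s := by
      intro s
      have h1 : HasDerivAt (fun s : ℝ => A * s ^ 2) (A * (2 * s)) s := by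
        simpa using ((hasDerivAt_pow 2 s).const_mul A)
      have h2 : HasDerivAt (fun s : ℝ => 1 + s ^ 2) (2 * s) s := by
        simpa using ((hasDerivAt_pow 2 s).const_add 1)
      have := h1.div h2 (hden s).ne'
      refine this.congr_deriv ?_
      rw [hd]
      field_simp
      ring
    have hρC : ContDiff ℝ 1 ρ := by
      apply ContDiff.div
      · exact contDiff_const.mul (contDiff_id.pow 2)
      · exact contDiff_const.add (contDiff_id.pow 2)
      · exact fun s => (hden s).ne'
    have hρ0 : ∀ s, 0 ≤ ρ s := fun s =>
      div_nonneg (mul_nonneg hA0.le (sq_nonneg s)) (hden s).le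
    have hρlt : ∀ s, ρ s < A := by
      intro s
      rw [hρdef]
      rw [div_lt_iff₀ (hden s)]
      nlinarith [sq_nonneg s]
    have hρpos : ∀ s : ℝ, 0 < s → 0 < ρ s := fun s hs =>
      div_pos (mul_pos hA0 (pow_pos hs 2)) (hden s)
    set γ : ℝ → Fin n → ℝ := fun s => ρ s • e with hγdef
    have hγ : ContDiff ℝ 1 γ := hρC.smul contDiff_const
    have hdγ : ∀ s, deriv γ s = d s • e := fun s => ((hρd s).smul_const e).deriv
    have hrad : ∀ s, rad (γ s) = ρ s := fun s => rad_smul_single j (ρ s) (hρ0 s)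
    have hball : ∀ s, 0 ≤ s → ENNReal.ofReal (rad (γ s)) < a := by
      intro s _
      rw [hrad s, haA]
      exact (ENNReal.ofReal_lt_ofReal_iff hA0).2 (hρlt s)
    have hesc : EscapesCompacts {x : Fin n → ℝ | ENNReal.ofReal (rad x) < a} γ := by
      intro K hK hKΩ
      rcases K.eq_empty_or_nonempty with rfl | hne
      · exact ⟨0, fun s _ hs => hs⟩
      obtain ⟨x₀, hx₀K, hx₀max⟩ := hK.exists_isMaxOn hne rad_continuous.continuousOn
      set m : ℝ := rad x₀ with hm
      have hm0 : 0 ≤ m := rad_nonneg _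
      have hmA : m < A := by
        have := hKΩ hx₀K
        rw [haA] at this
        exact (ENNReal.ofReal_lt_ofReal_iff hA0).1 this
      have hAm : 0 < A - m := by linarith
      refine ⟨max 1 (A / (A - m)), fun s hs hsK => ?_⟩
      have hs1 : (1:ℝ) ≤ s := le_trans (le_max_left _ _) hs
      have hs2 : A / (A - m) ≤ s := le_trans (le_max_right _ _) hs
      have hssq : A / (A - m) ≤ s ^ 2 := le_trans hs2 (by nlinarith)
      have h2 : A ≤ s ^ 2 * (A - m) := (div_le_iff₀ hAm).1 hssq
      have hms : m < ρ s := by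
        rw [hρdef, lt_div_iff₀ (hden s)]
        nlinarith
      have : rad (γ s) ≤ m := hx₀max hsK
      rw [hrad s] at this
      linarith
    have hlen := hc γ hγ hball hesc
    have hinj : Set.InjOn ρ (Ioi (0:ℝ)) := by
      have hsm : StrictMonoOn ρ (Ioi (0:ℝ)) := by
        intro x hx y hy hxy
        rw [hρdef]
        simp only
        rw [div_lt_div_iff₀ (hden x) (hden y)]
        have hx0 : (0:ℝ) < x := hx
        have h2 : x ^ 2 < y ^ 2 := by nlinarith
        nlinarith
      exact hsm.injOn
    have hbound : ∫⁻ s in Ioi (0:ℝ),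
        ENNReal.ofReal (Real.sqrt (rotForm f fdot (γ s) (deriv γ s)))
        ≤ ∫⁻ r in {r : ℝ | 0 < r ∧ ENNReal.ofReal r < a},
            ENNReal.ofReal (Real.sqrt (h r)) := by
      have hstep1 : ∫⁻ s in Ioi (0:ℝ),
          ENNReal.ofReal (Real.sqrt (rotForm f fdot (γ s) (deriv γ s)))
          = ∫⁻ s in Ioi (0:ℝ),
              ENNReal.ofReal |d s| * ENNReal.ofReal (Real.sqrt (h (ρ s))) := by
        apply lintegral_congr_ae
        filter_upwards [ae_restrict_mem measurableSet_Ioi] with s hs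
        have hγs : γ s = ρ s • e := rfl
        rw [hdγ s, hγs, rotForm_single f fdot j (ρ s) (d s) (hρ0 s)]
        have hhρ : 0 ≤ h (ρ s) := (hhpos (ρ s)
          ⟨hρ0 s, by rw [← hrad s]; exact hball s (le_of_lt hs)⟩).le
        rw [Real.sqrt_mul hhρ, ENNReal.ofReal_mul (Real.sqrt_nonneg _),
          Real.sqrt_sq_eq_abs]
        ring
      rw [hstep1]
      rw [← _root_.lintegral_image_eq_lintegral_abs_deriv_mul measurableSet_Ioi
        (fun x _ => (hρd x).hasDerivWithinAt) hinj
        (fun r => ENNReal.ofReal (Real.sqrt (h r)))]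
      apply lintegral_mono_set
      rintro r ⟨s, hs, rfl⟩
      exact ⟨hρpos s hs, by rw [haA]; exact (ENNReal.ofReal_lt_ofReal_iff hA0).2 (hρlt s)⟩
    rw [hlen] at hbound
    exact Hfin (top_le_iff.1 hbound)

lemma backward_dir (n : ℕ) (a : ℝ≥0∞) (ha : 0 < a) (f fdot : ℝ → ℝ)
    (hf : ContDiffOn ℝ 1 f {r : ℝ | 0 ≤ r ∧ ENNReal.ofReal r < a})
    (hfd : ContinuousOn fdot {r : ℝ | 0 ≤ r ∧ ENNReal.ofReal r < a})
    (hfpos : ∀ r ∈ {r : ℝ | 0 ≤ r ∧ ENNReal.ofReal r < a}, 0 < f r)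
    (hhpos : ∀ r ∈ {r : ℝ | 0 ≤ r ∧ ENNReal.ofReal r < a}, 0 < f r + r ^ 2 * fdot r)
    (Hint : ∫⁻ r in {r : ℝ | 0 < r ∧ ENNReal.ofReal r < a},
        ENNReal.ofReal (Real.sqrt (f r + r ^ 2 * fdot r)) = ⊤) :
    RotComplete n a f fdot := by
  intro γ hγ hball hesc
  by_contra hΛ
  set h : ℝ → ℝ := fun r => f r + r ^ 2 * fdot r with hh
  set Λ : ℝ≥0∞ := ∫⁻ s in Ioi (0:ℝ),
      ENNReal.ofReal (Real.sqrt (rotForm f fdot (γ s) (deriv γ s))) with hΛdef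
  -- choose c'
  obtain ⟨c', _, h1, h2⟩ := ENNReal.lt_iff_exists_real_btwn.1 (hball 0 le_rfl)
  have hr0 : rad (γ 0) < c' := by
    rwa [ENNReal.ofReal_lt_ofReal_iff_of_nonneg (rad_nonneg _)] at h1
  have hc'pos : 0 < c' := lt_of_le_of_lt (rad_nonneg _) hr0
  have Key : ∀ b, c' < b → ENNReal.ofReal b < a →
      ∫⁻ r in Ioc c' b, ENNReal.ofReal (Real.sqrt (h r)) ≤ Λ :=
    fun b hb1 hb2 => length_bound hf hfd hfpos hhpos γ hγ hball hesc
      hc'pos hr0.le hb1 hb2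
  -- split the integral
  set U : Set ℝ := {r | c' < r ∧ ENNReal.ofReal r < a} with hU
  have hUmeas : MeasurableSet U :=
    measurableSet_Ioi.inter (ENNReal.measurable_ofReal measurableSet_Iio)
  have hUS : U ⊆ {r : ℝ | 0 ≤ r ∧ ENNReal.ofReal r < a} :=
    fun r hr => ⟨(lt_trans hc'pos hr.1).le, hr.2⟩
  have hsplit : {r : ℝ | 0 < r ∧ ENNReal.ofReal r < a} = Ioc 0 c' ∪ U := by
    ext r
    simp only [mem_setOf_eq, mem_union, mem_Ioc, hU]
    constructor
    · rintro ⟨hr0, hra⟩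
      rcases le_or_gt r c' with hrc | hrc
      · exact Or.inl ⟨hr0, hrc⟩
      · exact Or.inr ⟨hrc, hra⟩
    · rintro (⟨hr0, hrc⟩ | ⟨hrc, hra⟩)
      · exact ⟨hr0, lt_of_le_of_lt (ENNReal.ofReal_le_ofReal hrc) h2⟩
      · exact ⟨lt_trans hc'pos hrc, hra⟩
  have hdisj : Disjoint (Ioc (0:ℝ) c') U := by
    rw [Set.disjoint_left]
    rintro r hr ⟨hrc, _⟩
    exact absurd hr.2 (not_le.2 hrc)
  -- continuity of h near [0, c']
  have hhcont : ContinuousOn h {r : ℝ | 0 ≤ r ∧ ENNReal.ofReal r < a} :=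
    hf.continuousOn.add ((continuousOn_id.pow 2).mul hfd)
  have hIccS : Icc (0:ℝ) c' ⊆ {r : ℝ | 0 ≤ r ∧ ENNReal.ofReal r < a} :=
    fun t ht => ⟨ht.1, lt_of_le_of_lt (ENNReal.ofReal_le_ofReal ht.2) h2⟩
  have hfin1 : ∫⁻ r in Ioc (0:ℝ) c', ENNReal.ofReal (Real.sqrt (h r)) < ⊤ := by
    obtain ⟨t₀, ht₀, ht₀max⟩ := isCompact_Icc.exists_isMaxOn
      (Set.nonempty_Icc.2 hc'pos.le)
      ((Real.continuous_sqrt.comp_continuousOn (hhcont.mono hIccS)))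
    calc ∫⁻ r in Ioc (0:ℝ) c', ENNReal.ofReal (Real.sqrt (h r))
        ≤ ∫⁻ _ in Ioc (0:ℝ) c', ENNReal.ofReal (Real.sqrt (h t₀)) := by
          apply setLIntegral_mono measurable_const
          intro x hx
          exact ENNReal.ofReal_le_ofReal (ht₀max ⟨hx.1.le, hx.2⟩)
      _ = ENNReal.ofReal (Real.sqrt (h t₀)) * volume (Ioc (0:ℝ) c') :=
          setLIntegral_const _ _
      _ < ⊤ := ENNReal.mul_lt_top ENNReal.ofReal_lt_top (by
          rw [Real.volume_Ioc]; exact ENNReal.ofReal_lt_top)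
  have hUtop : ∫⁻ r in U, ENNReal.ofReal (Real.sqrt (h r)) = ⊤ := by
    rw [hsplit, lintegral_union hUmeas hdisj] at Hint
    by_contra hne
    exact absurd Hint (ENNReal.add_ne_top.2 ⟨hfin1.ne, hne⟩)
  -- measurability of the integrand on U
  have hFively : AEMeasurable (fun r => ENNReal.ofReal (Real.sqrt (h r)))
      (volume.restrict U) := by
    have : AEMeasurable h (volume.restrict U) :=
      (hhcont.mono hUS).aemeasurable hUmeas
    exact (ENNReal.measurable_ofReal.comp Real.continuous_sqrt.measurable).comp_aemeasurable this
  -- contradiction via a monotone union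
  have hUle : ∫⁻ r in U, ENNReal.ofReal (Real.sqrt (h r)) ≤ Λ := by
    rcases eq_or_ne a ⊤ with rfl | haT
    · refine lintegral_union_le_of_monotone hUmeas hFively
        (s := fun k => Ioc c' (c' + 1 + k)) (fun k => measurableSet_Ioc)
        (fun i j hij => Ioc_subset_Ioc le_rfl (by
          have : (i:ℝ) ≤ j := Nat.cast_le.2 hij
          linarith)) ?_ (fun k => Key _ (by have : (0:ℝ) ≤ k := Nat.cast_nonneg k; linarith) ENNReal.ofReal_lt_top)
      · ext r
        simp only [mem_iUnion, mem_Ioc, hU, mem_setOf_eq, ENNReal.ofReal_lt_top,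
          and_true]
        constructor
        · rintro ⟨k, hk1, _⟩; exact hk1
        · intro hr
          obtain ⟨k, hk⟩ := exists_nat_ge (r - c' - 1)
          exact ⟨k, hr, by linarith⟩
    · set A : ℝ := a.toReal with hA
      have hA0 : 0 < A := ENNReal.toReal_pos ha.ne' haT
      have haA : a = ENNReal.ofReal A := (ENNReal.ofReal_toReal haT).symm
      have hc'A : c' < A := by
        rw [haA] at h2
        exact (ENNReal.ofReal_lt_ofReal_iff hA0).1 h2
      have hAc' : 0 < A - c' := by linarith
      set bb : ℕ → ℝ := fun k => A - (A - c') / (k + 2) with hbb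
      have hbb1 : ∀ k, c' < bb k := by
        intro k
        have hk2 : (1:ℝ) < (k:ℝ) + 2 := by
          have : (0:ℝ) ≤ k := Nat.cast_nonneg k
          linarith
        have := div_lt_self hAc' hk2
        simp only [hbb]
        linarith
      have hbb2 : ∀ k, bb k < A := fun k => by
        have : 0 < (A - c') / (k + 2) := div_pos hAc' (by positivity)
        simp only [hbb]; linarith
      refine lintegral_union_le_of_monotone hUmeas hFively
        (s := fun k => Ioc c' (bb k)) (fun k => measurableSet_Ioc)
        (fun i j hij => Ioc_subset_Ioc le_rfl ?_) ?_
        (fun k => Key _ (hbb1 k) (by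
          rw [haA]; exact (ENNReal.ofReal_lt_ofReal_iff hA0).2 (hbb2 k)))
      · have hcast : (i:ℝ) + 2 ≤ (j:ℝ) + 2 := by
          have : (i:ℝ) ≤ j := Nat.cast_le.2 hij
          linarith
        have := div_le_div_of_nonneg_left hAc'.le (by positivity : (0:ℝ) < (i:ℝ)+2) hcast
        simp only [hbb]
        linarith [this]
      · ext r
        simp only [mem_iUnion, mem_Ioc, hU, mem_setOf_eq]
        constructor
        · rintro ⟨k, hk1, hk2'⟩
          refine ⟨hk1, ?_⟩
          rw [haA]
          exact (ENNReal.ofReal_lt_ofReal_iff hA0).2 (lt_of_le_of_lt hk2' (hbb2 k))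
        · rintro ⟨hrc, hra⟩
          have hrA : r < A := by
            rw [haA] at hra
            exact (ENNReal.ofReal_lt_ofReal_iff hA0).1 hra
          have hAr : 0 < A - r := by linarith
          obtain ⟨k, hk⟩ := exists_nat_ge ((A - c') / (A - r))
          refine ⟨k, hrc, ?_⟩
          have hk2 : (A - c') / (A - r) ≤ (k:ℝ) + 2 := by linarith
          have h3 : A - c' ≤ ((k:ℝ) + 2) * (A - r) := (div_le_iff₀ hAr).1 hk2
          have h4 : (A - c') / ((k:ℝ) + 2) ≤ A - r := by
            rw [div_le_iff₀ (by positivity : (0:ℝ) < (k:ℝ)+2)]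
            linarith [h3]
          simp only [hbb]
          linarith
  rw [hUtop] at hUle
  exact hΛ (top_le_iff.1 hUle)

/-- A rotationally symmetric Hessian metric with `f = φ'/r > 0` and
`h = f + r f' > 0` on `[0,a)` is complete iff `∫₀^a √h dr = ∞`.
Here `fdot = f'/r`, so that `h = f + r²·fdot`. -/
theorem rot_complete_iff_integral (n : ℕ) (hn : 1 ≤ n) (a : ℝ≥0∞) (ha : 0 < a)
    (f fdot : ℝ → ℝ)
    (hf : ContDiffOn ℝ 1 f {r : ℝ | 0 ≤ r ∧ ENNReal.ofReal r < a})
    (hfd : ContinuousOn fdot {r : ℝ | 0 ≤ r ∧ ENNReal.ofReal r < a})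
    (hrel : ∀ r ∈ {r : ℝ | 0 ≤ r ∧ ENNReal.ofReal r < a},
      HasDerivWithinAt f (r * fdot r) {r : ℝ | 0 ≤ r ∧ ENNReal.ofReal r < a} r)
    (hfpos : ∀ r ∈ {r : ℝ | 0 ≤ r ∧ ENNReal.ofReal r < a}, 0 < f r)
    (hhpos : ∀ r ∈ {r : ℝ | 0 ≤ r ∧ ENNReal.ofReal r < a}, 0 < f r + r ^ 2 * fdot r) :
    RotComplete n a f fdot ↔
      ∫⁻ r in {r : ℝ | 0 < r ∧ ENNReal.ofReal r < a},
        ENNReal.ofReal (Real.sqrt (f r + r ^ 2 * fdot r)) = ⊤ := by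
  constructor
  · exact fun hc => forward_dir n hn a ha f fdot hhpos hc
  · exact fun Hint => backward_dir n a ha f fdot hf hfd hfpos hhpos Hint
end

section
/- Let $\phi$ be a smooth strictly convex radial potential on $B_a \subseteq \mathbb{R}^n$ ($n \ge 3$) with $f = \phi'/r > 0$ and $h = (rf)' > 0$, such that the associated Kähler Sasaki metric is complete and has nonnegative orthogonal bisectional curvature. Then $a = \infty$ and $f$ is constant, so the metric is a constant multiple of the flat Euclidean metric on $\mathbb{C}^n$. -/
open Set MeasureTheory ENNReal

/-- The orthogonal bisectional curvature value `4 R^(𝔥)_{u ū v v̄}` of the rotationally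
symmetric Kähler Sasaki metric at radius `r`, expressed via `ḟ, f̈, f⃛` (given as
`fd, fdd, fddd`) and the invariants `α_u, α_v, β = ⟨u,v⟩, λ = ⟨u,v̄⟩` of the unit
vectors `u, v ∈ ℂⁿ` (here `x = r·e₀`, so `α_u = u₀`, `α_v = v₀`). -/
noncomputable def bisecCurv (f fd fdd fddd : ℝ → ℝ) (r : ℝ) (αu αv β lam : ℂ) : ℝ :=
  let h := f r + r ^ 2 * fd r
  let 𝓑 := ((starRingEnd ℂ) β * αu * αv).re
  let 𝓒 := (lam * (starRingEnd ℂ) αu * αv).re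
  (-fd r * (1 + ‖lam‖ ^ 2) - (f r * fd r / h) * ‖β‖ ^ 2
    + (r ^ 2 * fd r ^ 2 / f r - r ^ 2 * fdd r)
        * (‖αu‖ ^ 2 + ‖αv‖ ^ 2 + 2 * 𝓒)
    + ‖αu * αv‖ ^ 2
        * ((4 * r ^ 4 * fd r * fdd r + r ^ 6 * fdd r ^ 2) / h
            - 4 * r ^ 4 * fd r ^ 3 / (f r * h) - r ^ 4 * fddd r)
    + 𝓑 * (4 * r ^ 2 * fd r ^ 2 - 2 * r ^ 2 * f r * fdd r) / h)

/-- A complete rotationally symmetric Kähler Sasaki metric (`n ≥ 3`) with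
nonnegative orthogonal bisectional curvature has `a = ∞` and constant `f`,
i.e. it is a constant multiple of the flat Euclidean metric on `ℂⁿ`.
Here `f = φ'/r > 0`, `h = f + r f' = f + r²·fd > 0`, `fd = f'/r`,
`fdd = (1/r)(fd)'`, `fddd = (1/r)(fdd)'`, completeness is the divergence of
`∫₀^a √h dr` (Lemma 2.2), and nonnegativity of the orthogonal bisectional
curvature is imposed on all pairs of Euclidean-unit vectors `u, v ∈ ℂⁿ`
that are `𝔥`-orthogonal (`Ψ_{u v̄} = f λ + r² ḟ α_u ᾱ_v = 0`). -/
theorem rot_nonneg_orth_bisec_flat (n : ℕ) (hn : 3 ≤ n) (a : ℝ≥0∞) (ha : 0 < a)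
    (f fd fdd fddd : ℝ → ℝ)
    (hf : ∀ r ∈ {r : ℝ | 0 ≤ r ∧ ENNReal.ofReal r < a},
      HasDerivWithinAt f (r * fd r) {r : ℝ | 0 ≤ r ∧ ENNReal.ofReal r < a} r)
    (hfd : ∀ r ∈ {r : ℝ | 0 ≤ r ∧ ENNReal.ofReal r < a},
      HasDerivWithinAt fd (r * fdd r) {r : ℝ | 0 ≤ r ∧ ENNReal.ofReal r < a} r)
    (hfdd : ∀ r ∈ {r : ℝ | 0 ≤ r ∧ ENNReal.ofReal r < a},
      HasDerivWithinAt fdd (r * fddd r) {r : ℝ | 0 ≤ r ∧ ENNReal.ofReal r < a} r)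
    (hfpos : ∀ r ∈ {r : ℝ | 0 ≤ r ∧ ENNReal.ofReal r < a}, 0 < f r)
    (hhpos : ∀ r ∈ {r : ℝ | 0 ≤ r ∧ ENNReal.ofReal r < a}, 0 < f r + r ^ 2 * fd r)
    (hcomplete : ∫⁻ r in {r : ℝ | 0 < r ∧ ENNReal.ofReal r < a},
      ENNReal.ofReal (Real.sqrt (f r + r ^ 2 * fd r)) = ⊤)
    (hcurv : ∀ r : ℝ, 0 < r → ENNReal.ofReal r < a → ∀ u v : Fin n → ℂ,
      (∑ i, ‖u i‖ ^ 2) = 1 → (∑ i, ‖v i‖ ^ 2) = 1 →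
      f r * (∑ i, u i * (starRingEnd ℂ) (v i))
          + r ^ 2 * fd r * (u ⟨0, by omega⟩ * (starRingEnd ℂ) (v ⟨0, by omega⟩)) = 0 →
      0 ≤ bisecCurv f fd fdd fddd r (u ⟨0, by omega⟩) (v ⟨0, by omega⟩) (∑ i, u i * v i)
            (∑ i, u i * (starRingEnd ℂ) (v i))) :
    a = ⊤ ∧ ∀ r s : ℝ, 0 ≤ r → 0 ≤ s → f r = f s := by
  -- Step A : ḟ ≤ 0 on (0, a), from the pair u = e₁, v = e₂
  have stepA : ∀ r : ℝ, 0 < r → ENNReal.ofReal r < a → fd r ≤ 0 := by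
    intro r hr hra
    have e12 : (⟨1, by omega⟩ : Fin n) ≠ ⟨2, by omega⟩ := by simp [Fin.ext_iff]
    have e10 : (⟨0, by omega⟩ : Fin n) ≠ ⟨1, by omega⟩ := by simp [Fin.ext_iff]
    have e20 : (⟨0, by omega⟩ : Fin n) ≠ ⟨2, by omega⟩ := by simp [Fin.ext_iff]
    have hsConj : (∑ i : Fin n, (if i = (⟨1, by omega⟩ : Fin n) then (1:ℂ) else 0)
        * (starRingEnd ℂ) (if i = (⟨2, by omega⟩ : Fin n) then (1:ℂ) else 0)) = 0 := by
      apply Finset.sum_eq_zero; intro i _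
      rcases eq_or_ne i (⟨1, by omega⟩ : Fin n) with rfl | h <;> simp [e12, *]
    have hsMul : (∑ i : Fin n, (if i = (⟨1, by omega⟩ : Fin n) then (1:ℂ) else 0)
        * (if i = (⟨2, by omega⟩ : Fin n) then (1:ℂ) else 0)) = 0 := by
      apply Finset.sum_eq_zero; intro i _
      rcases eq_or_ne i (⟨1, by omega⟩ : Fin n) with rfl | h <;> simp [e12, *]
    have key := hcurv r hr hra
      (fun i => if i = ⟨1, by omega⟩ then 1 else 0)
      (fun i => if i = ⟨2, by omega⟩ then 1 else 0)
      ?_ ?_ ?_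
    rotate_left
    · exact (by rw [Finset.sum_eq_single (⟨1, by omega⟩ : Fin n)] <;> simp +contextual)
    · exact (by rw [Finset.sum_eq_single (⟨2, by omega⟩ : Fin n)] <;> simp +contextual)
    · rw [hsConj]
      simp [if_neg e10]
    · simp [hsConj, hsMul, e10, e20, bisecCurv] at key
      linarith
  -- Step B : -f·(log f)'' ≥ 0 on (0, a), from the pair u = e₀, v = e₁
  have stepB : ∀ r : ℝ, 0 < r → ENNReal.ofReal r < a →
      (fd r + r ^ 2 * fdd r) * f r ≤ (r * fd r) ^ 2 := by
    intro r hr hra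
    have e01 : (⟨0, by omega⟩ : Fin n) ≠ ⟨1, by omega⟩ := by simp [Fin.ext_iff]
    have e10 : (⟨1, by omega⟩ : Fin n) ≠ ⟨0, by omega⟩ := e01.symm
    have hsConj : (∑ i : Fin n, (if i = (⟨0, by omega⟩ : Fin n) then (1:ℂ) else 0)
        * (starRingEnd ℂ) (if i = (⟨1, by omega⟩ : Fin n) then (1:ℂ) else 0)) = 0 := by
      apply Finset.sum_eq_zero; intro i _
      rcases eq_or_ne i (⟨0, by omega⟩ : Fin n) with rfl | h <;> simp [e01, *]
    have hsMul : (∑ i : Fin n, (if i = (⟨0, by omega⟩ : Fin n) then (1:ℂ) else 0)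
        * (if i = (⟨1, by omega⟩ : Fin n) then (1:ℂ) else 0)) = 0 := by
      apply Finset.sum_eq_zero; intro i _
      rcases eq_or_ne i (⟨0, by omega⟩ : Fin n) with rfl | h <;> simp [e01, *]
    have key := hcurv r hr hra
      (fun i => if i = ⟨0, by omega⟩ then 1 else 0)
      (fun i => if i = ⟨1, by omega⟩ then 1 else 0)
      ?_ ?_ ?_
    rotate_left
    · exact (by rw [Finset.sum_eq_single (⟨0, by omega⟩ : Fin n)] <;> simp +contextual)
    · exact (by rw [Finset.sum_eq_single (⟨1, by omega⟩ : Fin n)] <;> simp +contextual)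
    · simp only []
      rw [hsConj]
      simp [if_neg e01]
    · simp [hsConj, hsMul, e01, bisecCurv] at key
      have hfr : 0 < f r := hfpos r ⟨hr.le, hra⟩
      have h1 : fd r + r ^ 2 * fdd r ≤ r ^ 2 * fd r ^ 2 / f r := by linarith
      calc (fd r + r ^ 2 * fdd r) * f r ≤ r ^ 2 * fd r ^ 2 / f r * f r :=
            mul_le_mul_of_nonneg_right h1 hfr.le
        _ = (r * fd r) ^ 2 := by rw [div_mul_cancel₀ _ hfr.ne']; ring
  -- Step C : completeness forces a = ⊤
  have haT : a = ⊤ := by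
    by_contra hne
    set A := a.toReal with hA
    have hApos : 0 < A := ENNReal.toReal_pos ha.ne' hne
    have hiff : ∀ r : ℝ, 0 ≤ r → (ENNReal.ofReal r < a ↔ r < A) := fun r hr =>
      ENNReal.ofReal_lt_iff_lt_toReal hr hne
    have hSeq : {r : ℝ | 0 ≤ r ∧ ENNReal.ofReal r < a} = Ico 0 A := by
      ext r
      simp only [mem_setOf_eq, mem_Ico]
      exact ⟨fun ⟨h1, h2⟩ => ⟨h1, (hiff r h1).1 h2⟩, fun ⟨h1, h2⟩ => ⟨h1, (hiff r h1).2 h2⟩⟩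
    have h0S : (0:ℝ) ∈ {r : ℝ | 0 ≤ r ∧ ENNReal.ofReal r < a} := ⟨le_refl 0, by simpa using ha⟩
    have hf0 : 0 < f 0 := hfpos 0 h0S
    have hant : AntitoneOn f (Ico 0 A) := by
      apply antitoneOn_of_hasDerivWithinAt_nonpos (convex_Ico 0 A)
        (f' := fun r => r * fd r)
      · intro x hx
        rw [← hSeq] at hx ⊢
        exact (hf x hx).continuousWithinAt
      · intro x hx
        rw [interior_Ico] at hx
        have hxS : x ∈ {r : ℝ | 0 ≤ r ∧ ENNReal.ofReal r < a} := by
          rw [hSeq]; exact Ioo_subset_Ico_self hx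
        exact ((hf x hxS).hasDerivAt (by rw [hSeq]; exact Ico_mem_nhds hx.1 hx.2)).hasDerivWithinAt
      · intro x hx
        rw [interior_Ico] at hx
        exact mul_nonpos_of_nonneg_of_nonpos hx.1.le
          (stepA x hx.1 ((hiff x hx.1.le).2 hx.2))
    have hTeq : {r : ℝ | 0 < r ∧ ENNReal.ofReal r < a} = Ioo 0 A := by
      ext r
      simp only [mem_setOf_eq, mem_Ioo]
      exact ⟨fun ⟨h1, h2⟩ => ⟨h1, (hiff r h1.le).1 h2⟩, fun ⟨h1, h2⟩ => ⟨h1, (hiff r h1.le).2 h2⟩⟩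
    rw [hTeq] at hcomplete
    have hbound : (∫⁻ r in Ioo 0 A, ENNReal.ofReal (Real.sqrt (f r + r ^ 2 * fd r)))
        ≤ ENNReal.ofReal (Real.sqrt (f 0)) * volume (Ioo 0 A) := by
      rw [← setLIntegral_const]
      apply setLIntegral_mono' measurableSet_Ioo
      intro x hx
      apply ENNReal.ofReal_le_ofReal
      apply Real.sqrt_le_sqrt
      have h1 : f x ≤ f 0 := hant ⟨le_refl 0, hApos⟩ ⟨hx.1.le, hx.2⟩ hx.1.le
      have h2 : x ^ 2 * fd x ≤ 0 := mul_nonpos_of_nonneg_of_nonpos (sq_nonneg x)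
        (stepA x hx.1 ((hiff x hx.1.le).2 hx.2))
      linarith
    rw [hcomplete] at hbound
    exact (ENNReal.mul_ne_top ENNReal.ofReal_ne_top
      (by simp [Real.volume_Ioo])) (top_le_iff.1 hbound)
  subst haT
  simp only [ENNReal.ofReal_lt_top, and_true] at hf hfd hfdd hfpos hhpos
  refine ⟨rfl, ?_⟩
  -- Step D : ḟ ≡ 0 on (0, ∞)
  have hfd0 : ∀ r : ℝ, 0 < r → fd r = 0 := by
    intro r₀ hr₀
    by_contra hne0
    have hflt : fd r₀ < 0 := lt_of_le_of_ne (stepA r₀ hr₀ (by simp)) hne0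
    have hfr₀ : 0 < f r₀ := hfpos r₀ hr₀.le
    set c : ℝ := -(r₀ * fd r₀ / f r₀) with hc
    have hcpos : 0 < c := by
      rw [hc, neg_pos]
      exact div_neg_of_neg_of_pos (mul_neg_of_pos_of_neg hr₀ hflt) hfr₀
    set G : ℝ → ℝ := fun r => r * fd r / f r with hGdef
    have hGant : AntitoneOn G (Ici r₀) := by
      apply antitoneOn_of_hasDerivWithinAt_nonpos (convex_Ici r₀)
        (f' := fun r => ((fd r + r ^ 2 * fdd r) * f r - (r * fd r) ^ 2) / f r ^ 2)
      · intro x hx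
        have hx0 : 0 < x := lt_of_lt_of_le hr₀ hx
        have hfx : HasDerivAt f (x * fd x) x :=
          (hf x hx0.le).hasDerivAt (Ici_mem_nhds hx0)
        have hfdx : HasDerivAt fd (x * fdd x) x :=
          (hfd x hx0.le).hasDerivAt (Ici_mem_nhds hx0)
        exact (((continuousAt_id.mul hfdx.continuousAt).div
          hfx.continuousAt (hfpos x hx0.le).ne')).continuousWithinAt
      · intro x hx
        rw [interior_Ici] at hx
        have hx0 : 0 < x := lt_trans hr₀ hx
        have hfx : HasDerivAt f (x * fd x) x :=
          (hf x hx0.le).hasDerivAt (Ici_mem_nhds hx0)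
        have hfdx : HasDerivAt fd (x * fdd x) x :=
          (hfd x hx0.le).hasDerivAt (Ici_mem_nhds hx0)
        have hN : HasDerivAt (fun r => r * fd r) (1 * fd x + x * (x * fdd x)) x :=
          (hasDerivAt_id x).mul hfdx
        have hGx : HasDerivAt G
            (((1 * fd x + x * (x * fdd x)) * f x - x * fd x * (x * fd x)) / f x ^ 2) x :=
          hN.div hfx (hfpos x hx0.le).ne'
        have heq : ((1 * fd x + x * (x * fdd x)) * f x - x * fd x * (x * fd x)) / f x ^ 2
            = ((fd x + x ^ 2 * fdd x) * f x - (x * fd x) ^ 2) / f x ^ 2 := by ring_nf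
        rw [heq] at hGx
        exact hGx.hasDerivWithinAt
      · intro x hx
        rw [interior_Ici] at hx
        have hx0 : 0 < x := lt_trans hr₀ hx
        apply div_nonpos_of_nonpos_of_nonneg _ (sq_nonneg _)
        have := stepB x hx0 (by simp)
        linarith
    set R : ℝ := max r₀ (2 / c) with hR
    have hRr₀ : r₀ ≤ R := le_max_left _ _
    have hR0 : 0 < R := lt_of_lt_of_le hr₀ hRr₀
    have hRc : 2 / c ≤ R := le_max_right _ _
    have hGR : G R ≤ -c := by
      have := hGant self_mem_Ici hRr₀ hRr₀
      simpa [hGdef, hc] using this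
    have hfR : 0 < f R := hfpos R hR0.le
    have hhR : 0 < f R + R ^ 2 * fd R := hhpos R hR0.le
    have h1 : R * fd R ≤ -c * f R := by
      have := (div_le_iff₀ hfR).1 hGR
      linarith
    have h2 : 2 ≤ c * R := by
      rw [div_le_iff₀ hcpos] at hRc
      linarith
    nlinarith [mul_le_mul_of_nonneg_left h1 hR0.le, mul_pos hcpos hfR]
  -- Step E : f is constant on [0, ∞)
  have key : ∀ r : ℝ, 0 ≤ r → f r = f 0 := by
    intro r hr
    have := constant_of_has_deriv_right_zero (f := f) (a := 0) (b := r)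
      (fun x hx => ((hf x hx.1).continuousWithinAt).mono (fun y hy => hy.1))
      ?_ r ⟨hr, le_refl r⟩
    · exact this
    · intro x hx
      have hder := (hf x hx.1).mono (Ici_subset_Ici.2 hx.1)
      have hval : x * fd x = 0 := by
        rcases eq_or_lt_of_le hx.1 with rfl | hx0
        · ring
        · rw [hfd0 x hx0]; ring
      rwa [hval] at hder
  intro r s hr hs
  rw [key r hr, key s hs]
end
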